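/- Suppose s₂ > 1, p₂ < 0, and Q(p₁,p₂) = p₁² + p₂² - (p₁s₂ - p₂s₁)² > 0. Then in the interval (-π/12, π/12) there are exactly two angles θ₊ ≠ θ₋ for which there exists r > 0 with p₁ + r(s₁ - cos 12θ) = 0 and p₂ + r(s₂ + sin 12θ) = 0; they are given by θ_± = (1/6)·arctan(Δ_±) with Δ_± = (p₁ ± √Q)/(p₂ - p₁s₂ + p₂s₁), and the corresponding radii are r_± = -p₂/(s₂ + sin(12θ_±)). -/

import Mathlib

open Real Set

lemma sin_two_arctan (t : ℝ) : Real.sin (2 * Real.arctan t) = 2*t/(1+t^2) := by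
  have h1 : (0:ℝ) < 1 + t^2 := by positivity
  have hne : Real.sqrt (1+t^2) ≠ 0 := by positivity
  rw [Real.sin_two_mul, Real.sin_arctan, Real.cos_arctan]
  field_simp
  rw [Real.sq_sqrt h1.le]

lemma cos_two_arctan (t : ℝ) : Real.cos (2 * Real.arctan t) = (1-t^2)/(1+t^2) := by
  have h1 : (0:ℝ) < 1 + t^2 := by positivity
  have hs2 : Real.sqrt (1+t^2) ^ 2 = 1 + t^2 := Real.sq_sqrt (by positivity)
  have hne : Real.sqrt (1+t^2) ≠ 0 := by positivity
  rw [Real.cos_two_mul, Real.cos_arctan]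
  field_simp
  rw [hs2]; ring

lemma aux_fwd (p₁ p₂ s₁ s₂ t θ : ℝ) (hs : 1 < s₂) (hp : p₂ < 0)
    (ht : (p₂ - p₁*s₂ + p₂*s₁)*t^2 - 2*p₁*t + ((p₂*s₁ - p₁*s₂) - p₂) = 0)
    (hsin : Real.sin (12*θ) = 2*t/(1+t^2))
    (hcos : Real.cos (12*θ) = (1-t^2)/(1+t^2)) :
    0 < -p₂ / (s₂ + Real.sin (12 * θ)) ∧
    p₁ + (-p₂ / (s₂ + Real.sin (12 * θ))) * (s₁ - Real.cos (12 * θ)) = 0 ∧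
    p₂ + (-p₂ / (s₂ + Real.sin (12 * θ))) * (s₂ + Real.sin (12 * θ)) = 0 := by
  have hu : (0:ℝ) < 1 + t^2 := by positivity
  rw [hsin, hcos]
  have hsin1 : -1 ≤ 2*t/(1+t^2) := by
    rw [le_div_iff₀ hu]; nlinarith [sq_nonneg (t+1)]
  have hS : 0 < s₂ + 2*t/(1+t^2) := by linarith
  have hSne : s₂ + 2*t/(1+t^2) ≠ 0 := ne_of_gt hS
  have hS' : 0 < s₂*(1+t^2)+2*t := by
    have h := mul_pos hS hu
    rw [add_mul, div_mul_cancel₀ _ hu.ne'] at h; linarith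
  refine ⟨div_pos (by linarith) hS, ?_, ?_⟩
  · field_simp [hS'.ne']
    linear_combination (-1:ℝ) * ht
  · rw [div_mul_cancel₀ _ hSne]; ring

lemma root_quad (p₁ p₂ s₁ s₂ q e : ℝ) (hd : p₂ - p₁*s₂ + p₂*s₁ ≠ 0)
    (hq2 : q^2 = p₁^2 + p₂^2 - (p₁*s₂ - p₂*s₁)^2) (he : e^2 = 1) :
    (p₂ - p₁*s₂ + p₂*s₁) * ((p₁ + e*q)/(p₂ - p₁*s₂ + p₂*s₁))^2
      - 2*p₁*((p₁ + e*q)/(p₂ - p₁*s₂ + p₂*s₁)) + ((p₂*s₁ - p₁*s₂) - p₂) = 0 := by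
  have h : (p₁+e*q)^2 - 2*p₁*(p₁+e*q) + ((p₂*s₁-p₁*s₂)-p₂)*(p₂-p₁*s₂+p₂*s₁) = 0 := by
    linear_combination q^2*he + hq2
  have hrw : (p₂ - p₁*s₂ + p₂*s₁) * ((p₁ + e*q)/(p₂ - p₁*s₂ + p₂*s₁))^2
      - 2*p₁*((p₁ + e*q)/(p₂ - p₁*s₂ + p₂*s₁)) + ((p₂*s₁ - p₁*s₂) - p₂)
      = ((p₁+e*q)^2 - 2*p₁*(p₁+e*q) + ((p₂*s₁-p₁*s₂)-p₂)*(p₂-p₁*s₂+p₂*s₁))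
        / (p₂ - p₁*s₂ + p₂*s₁) := by
    field_simp
  rw [hrw, h, zero_div]

lemma fac_quad (p₁ p₂ s₁ s₂ q t : ℝ) (hd : p₂ - p₁*s₂ + p₂*s₁ ≠ 0)
    (hq2 : q^2 = p₁^2 + p₂^2 - (p₁*s₂ - p₂*s₁)^2)
    (hquad : (p₂ - p₁*s₂ + p₂*s₁)*t^2 - 2*p₁*t + ((p₂*s₁ - p₁*s₂) - p₂) = 0) :
    t = (p₁ + q)/(p₂ - p₁*s₂ + p₂*s₁) ∨ t = (p₁ - q)/(p₂ - p₁*s₂ + p₂*s₁) := by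
  have key : (t*(p₂ - p₁*s₂ + p₂*s₁) - (p₁ + q)) * (t*(p₂ - p₁*s₂ + p₂*s₁) - (p₁ - q)) = 0 := by
    linear_combination (p₂ - p₁*s₂ + p₂*s₁) * hquad - hq2
  rcases mul_eq_zero.1 key with h | h
  · left; rw [eq_div_iff hd]; linarith
  · right; rw [eq_div_iff hd]; linarith

theorem exactly_two_angles (p₁ p₂ s₁ s₂ : ℝ) (hs : 1 < s₂) (hp : p₂ < 0)
    (hQ : 0 < p₁ ^ 2 + p₂ ^ 2 - (p₁ * s₂ - p₂ * s₁) ^ 2)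
    (hd : p₂ - p₁ * s₂ + p₂ * s₁ ≠ 0)
    (θp θm : ℝ)
    (hθp : θp = (1 / 6) * Real.arctan
      ((p₁ + Real.sqrt (p₁ ^ 2 + p₂ ^ 2 - (p₁ * s₂ - p₂ * s₁) ^ 2))
        / (p₂ - p₁ * s₂ + p₂ * s₁)))
    (hθm : θm = (1 / 6) * Real.arctan
      ((p₁ - Real.sqrt (p₁ ^ 2 + p₂ ^ 2 - (p₁ * s₂ - p₂ * s₁) ^ 2))
        / (p₂ - p₁ * s₂ + p₂ * s₁))) :
    θp ≠ θm ∧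
    θp ∈ Set.Ioo (-(Real.pi / 12)) (Real.pi / 12) ∧
    θm ∈ Set.Ioo (-(Real.pi / 12)) (Real.pi / 12) ∧
    (∀ θ ∈ ({θp, θm} : Set ℝ),
      0 < -p₂ / (s₂ + Real.sin (12 * θ)) ∧
      p₁ + (-p₂ / (s₂ + Real.sin (12 * θ))) * (s₁ - Real.cos (12 * θ)) = 0 ∧
      p₂ + (-p₂ / (s₂ + Real.sin (12 * θ))) * (s₂ + Real.sin (12 * θ)) = 0) ∧
    (∀ θ ∈ Set.Ioo (-(Real.pi / 12)) (Real.pi / 12),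
      (∃ r : ℝ, 0 < r ∧ p₁ + r * (s₁ - Real.cos (12 * θ)) = 0 ∧
        p₂ + r * (s₂ + Real.sin (12 * θ)) = 0) → θ = θp ∨ θ = θm) := by
  obtain ⟨q, hqdef⟩ : ∃ q, Real.sqrt (p₁ ^ 2 + p₂ ^ 2 - (p₁ * s₂ - p₂ * s₁) ^ 2) = q := ⟨_, rfl⟩
  have hq2 : q ^ 2 = p₁^2 + p₂^2 - (p₁*s₂ - p₂*s₁)^2 := by
    rw [← hqdef]; exact Real.sq_sqrt hQ.le
  have hqpos : 0 < q := by rw [← hqdef]; exact Real.sqrt_pos.2 hQ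
  rw [hqdef] at hθp hθm
  have htp := root_quad p₁ p₂ s₁ s₂ q 1 hd hq2 (by norm_num)
  have htm := root_quad p₁ p₂ s₁ s₂ q (-1) hd hq2 (by norm_num)
  rw [show p₁ + (1:ℝ)*q = p₁ + q by ring] at htp
  rw [show p₁ + (-1:ℝ)*q = p₁ - q by ring] at htm
  have h12p : 12 * θp = 2 * Real.arctan ((p₁ + q)/(p₂ - p₁*s₂ + p₂*s₁)) := by
    rw [hθp]; ring
  have h12m : 12 * θm = 2 * Real.arctan ((p₁ - q)/(p₂ - p₁*s₂ + p₂*s₁)) := by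
    rw [hθm]; ring
  have hne : θp ≠ θm := by
    intro h
    have harc : Real.arctan ((p₁ + q)/(p₂ - p₁*s₂ + p₂*s₁))
        = Real.arctan ((p₁ - q)/(p₂ - p₁*s₂ + p₂*s₁)) := by
      have h2 := h12p.symm.trans (by rw [h, h12m])
      linarith
    have hΔ := Real.arctan_injective harc
    rw [div_eq_div_iff hd hd] at hΔ
    have h0 : q * (p₂ - p₁*s₂ + p₂*s₁) = 0 := by linarith
    rcases mul_eq_zero.1 h0 with h' | h'
    · linarith
    · exact hd h'
  have memp : θp ∈ Set.Ioo (-(Real.pi / 12)) (Real.pi / 12) := by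
    have h1 := Real.neg_pi_div_two_lt_arctan ((p₁ + q)/(p₂ - p₁*s₂ + p₂*s₁))
    have h2 := Real.arctan_lt_pi_div_two ((p₁ + q)/(p₂ - p₁*s₂ + p₂*s₁))
    exact ⟨by rw [hθp]; linarith, by rw [hθp]; linarith⟩
  have memm : θm ∈ Set.Ioo (-(Real.pi / 12)) (Real.pi / 12) := by
    have h1 := Real.neg_pi_div_two_lt_arctan ((p₁ - q)/(p₂ - p₁*s₂ + p₂*s₁))
    have h2 := Real.arctan_lt_pi_div_two ((p₁ - q)/(p₂ - p₁*s₂ + p₂*s₁))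
    exact ⟨by rw [hθm]; linarith, by rw [hθm]; linarith⟩
  refine ⟨hne, memp, memm, ?_, ?_⟩
  · intro θ hθ
    simp only [Set.mem_insert_iff, Set.mem_singleton_iff] at hθ
    rcases hθ with rfl | rfl
    · exact aux_fwd p₁ p₂ s₁ s₂ _ θ hs hp htp
        (by rw [h12p, sin_two_arctan]) (by rw [h12p, cos_two_arctan])
    · exact aux_fwd p₁ p₂ s₁ s₂ _ θ hs hp htm
        (by rw [h12m, sin_two_arctan]) (by rw [h12m, cos_two_arctan])
  · rintro θ ⟨hθ1, hθ2⟩ ⟨r, hr, h1, h2⟩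
    have hc6 : 0 < Real.cos (6*θ) :=
      Real.cos_pos_of_mem_Ioo ⟨by linarith, by linarith⟩
    have hsc : Real.sin (6*θ) ^ 2 + Real.cos (6*θ) ^ 2 = 1 := Real.sin_sq_add_cos_sq (6*θ)
    have hsin12 : Real.sin (12*θ) = 2 * Real.sin (6*θ) * Real.cos (6*θ) := by
      rw [show (12:ℝ)*θ = 2*(6*θ) by ring, Real.sin_two_mul]
    have hcos12 : Real.cos (12*θ) = 1 - 2 * Real.sin (6*θ)^2 := by
      rw [show (12:ℝ)*θ = 2*(6*θ) by ring, Real.cos_two_mul']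
      linear_combination hsc
    have key : p₁ * (s₂ + Real.sin (12*θ)) - p₂ * (s₁ - Real.cos (12*θ)) = 0 := by
      linear_combination (s₂ + Real.sin (12*θ)) * h1 - (s₁ - Real.cos (12*θ)) * h2
    rw [hsin12, hcos12] at key
    have quad : (p₂ - p₁*s₂ + p₂*s₁) * Real.sin (6*θ)^2
        - 2*p₁*Real.sin (6*θ)*Real.cos (6*θ)
        + ((p₂*s₁ - p₁*s₂) - p₂) * Real.cos (6*θ)^2 = 0 := by
      linear_combination (-1 : ℝ) * key + (p₂*s₁ - p₁*s₂ - p₂) * hsc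
    have hts : Real.sin (6*θ) = (Real.sin (6*θ)/Real.cos (6*θ)) * Real.cos (6*θ) := by
      rw [div_mul_cancel₀ _ hc6.ne']
    have quadt : (p₂ - p₁*s₂ + p₂*s₁) * (Real.sin (6*θ)/Real.cos (6*θ))^2
        - 2*p₁*(Real.sin (6*θ)/Real.cos (6*θ)) + ((p₂*s₁ - p₁*s₂) - p₂) = 0 := by
      have h' : Real.cos (6*θ)^2 * ((p₂ - p₁*s₂ + p₂*s₁) * (Real.sin (6*θ)/Real.cos (6*θ))^2
          - 2*p₁*(Real.sin (6*θ)/Real.cos (6*θ)) + ((p₂*s₁ - p₁*s₂) - p₂)) = 0 := by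
        have hcne : Real.cos (6*θ) ≠ 0 := hc6.ne'
        have hrw : Real.cos (6*θ)^2 * ((p₂ - p₁*s₂ + p₂*s₁) * (Real.sin (6*θ)/Real.cos (6*θ))^2
            - 2*p₁*(Real.sin (6*θ)/Real.cos (6*θ)) + ((p₂*s₁ - p₁*s₂) - p₂))
            = (p₂ - p₁*s₂ + p₂*s₁) * Real.sin (6*θ)^2
              - 2*p₁*Real.sin (6*θ)*Real.cos (6*θ)
              + ((p₂*s₁ - p₁*s₂) - p₂) * Real.cos (6*θ)^2 := by
          field_simp
        rw [hrw, quad]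
      rcases mul_eq_zero.1 h' with h'' | h''
      · exact absurd h'' (pow_ne_zero 2 hc6.ne')
      · exact h''
    have harct : Real.arctan (Real.sin (6*θ)/Real.cos (6*θ)) = 6 * θ := by
      rw [← Real.tan_eq_sin_div_cos]
      exact Real.arctan_tan (by linarith) (by linarith)
    rcases fac_quad p₁ p₂ s₁ s₂ q _ hd hq2 quadt with h | h
    · left; rw [hθp]; rw [h] at harct; linarith
    · right; rw [hθm]; rw [h] at harct; linarith
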